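/- Let V be a vector space over an algebraically closed field k of characteristic 0 with a fixed basis B, and let c : V ⊗ V → V ⊗ V be a linear map satisfying the braid equation (c⊗id)(id⊗c)(c⊗id) = (id⊗c)(c⊗id)(id⊗c). Suppose that for every x ∈ B there is a bijection f_x : B → B and nonzero scalars q_{x,y} such that c(x ⊗ y) = q_{x,y} · f_x(y) ⊗ x for all x, y ∈ B. Then the operation x ▷ y := f_x(y) makes B a rack, i.e., x ▷ (y ▷ z) = (x ▷ y) ▷ (x ▷ z) for all x, y, z ∈ B, and each map y ↦ x ▷ y is bijective. -/

import Mathlib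

open scoped TensorProduct

/-- The rack lemma: a braiding of the form `c(x ⊗ y) = q_{x,y} · f_x(y) ⊗ x` on a basis
induces a rack structure `x ▷ y = f_x(y)` on the basis. -/
theorem rack_from_braiding {K V B : Type*} [Field K] [IsAlgClosed K] [CharZero K]
    [AddCommGroup V] [Module K V] (bas : Module.Basis B K V)
    (c : V ⊗[K] V →ₗ[K] V ⊗[K] V)
    (hbraid :
      letI α := TensorProduct.assoc K V V V
      letI c₁ : V ⊗[K] (V ⊗[K] V) →ₗ[K] V ⊗[K] (V ⊗[K] V) :=
        (α.toLinearMap.comp (LinearMap.rTensor V c)).comp α.symm.toLinearMap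
      letI c₂ : V ⊗[K] (V ⊗[K] V) →ₗ[K] V ⊗[K] (V ⊗[K] V) := LinearMap.lTensor V c
      c₁.comp (c₂.comp c₁) = c₂.comp (c₁.comp c₂))
    (f : B → B → B) (hf : ∀ x, Function.Bijective (f x))
    (q : B → B → K) (hq : ∀ x y, q x y ≠ 0)
    (hc : ∀ x y, c (bas x ⊗ₜ[K] bas y) = q x y • (bas (f x y) ⊗ₜ[K] bas x)) :
    (∀ x y z : B, f x (f y z) = f (f x y) (f x z)) ∧ (∀ x, Function.Bijective (f x)) := by
  refine ⟨?_, hf⟩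
  intro x y z
  set α := TensorProduct.assoc K V V V with hα
  set c₁ : V ⊗[K] (V ⊗[K] V) →ₗ[K] V ⊗[K] (V ⊗[K] V) :=
    (α.toLinearMap.comp (LinearMap.rTensor V c)).comp α.symm.toLinearMap with hc₁
  set c₂ : V ⊗[K] (V ⊗[K] V) →ₗ[K] V ⊗[K] (V ⊗[K] V) := LinearMap.lTensor V c with hc₂
  -- computation rules on pure basis tensors
  have hC1 : ∀ a b d : B, c₁ (bas a ⊗ₜ[K] (bas b ⊗ₜ[K] bas d)) =
      q a b • (bas (f a b) ⊗ₜ[K] (bas a ⊗ₜ[K] bas d)) := by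
    intro a b d
    rw [hc₁, hα]
    simp only [LinearMap.comp_apply, LinearEquiv.coe_coe, TensorProduct.assoc_symm_tmul,
      LinearMap.rTensor_tmul, hc, TensorProduct.smul_tmul', map_smul,
      TensorProduct.assoc_tmul]
  have hC2 : ∀ a b d : B, c₂ (bas a ⊗ₜ[K] (bas b ⊗ₜ[K] bas d)) =
      q b d • (bas a ⊗ₜ[K] (bas (f b d) ⊗ₜ[K] bas b)) := by
    intro a b d
    simp [hc₂, LinearMap.lTensor_tmul, hc, TensorProduct.tmul_smul]
  have h := congrArg (fun g : V ⊗[K] (V ⊗[K] V) →ₗ[K] V ⊗[K] (V ⊗[K] V) =>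
    g (bas x ⊗ₜ[K] (bas y ⊗ₜ[K] bas z))) hbraid
  simp only [LinearMap.comp_apply] at h
  rw [hC1, map_smul, hC2, smul_smul, map_smul, hC1, smul_smul] at h
  rw [hC2, map_smul, hC1, smul_smul, map_smul, hC2, smul_smul] at h
  -- now compare in the basis of the triple tensor product
  set T := (bas.tensorProduct (bas.tensorProduct bas)) with hT
  have e1 : bas (f (f x y) (f x z)) ⊗ₜ[K] (bas (f x y) ⊗ₜ[K] bas x) =
      T (f (f x y) (f x z), f x y, x) := by
    simp [hT, Module.Basis.tensorProduct_apply]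
  have e2 : bas (f x (f y z)) ⊗ₜ[K] (bas (f x y) ⊗ₜ[K] bas x) =
      T (f x (f y z), f x y, x) := by
    simp [hT, Module.Basis.tensorProduct_apply]
  rw [e1, e2] at h
  by_contra hne
  have h1 := congrArg (fun v => T.repr v (f x (f y z), f x y, x)) h
  simp only [map_smul, Finsupp.smul_apply, Module.Basis.repr_self, Finsupp.single_apply,
    smul_eq_mul, Prod.mk.injEq] at h1
  rw [Finsupp.single_eq_of_ne (fun hh => hne (Prod.ext_iff.mp hh).1),
    Finsupp.single_eq_same] at h1
  exact absurd h1.symm (by simp [hq, mul_eq_zero])
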